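/- There exist constants C > 0 and δ > 0 such that for all sufficiently small η > 0, |∫_{2η}^{1} t^{-1} t^{(2-n)/2} J_{(n-2)/2}(t) dt| ≥ C |log η| - δ, i.e. this integral grows like ln(1/η) as η → 0⁺. -/

import Mathlib

open Real MeasureTheory

/-- The Bessel function of the first kind, defined by its power series. -/
noncomputable def besselJ (ν z : ℝ) : ℝ :=
  ∑' k : ℕ, (-1 : ℝ) ^ k * (z / 2) ^ (ν + 2 * k) / (Real.Gamma (k + 1) * Real.Gamma (k + ν + 1))

/-- The `k`-th term of the Bessel series. -/
noncomputable def bTerm (ν t : ℝ) (k : ℕ) : ℝ :=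
  (-1 : ℝ) ^ k * (t / 2) ^ (ν + 2 * k) / (Real.Gamma (k + 1) * Real.Gamma (k + ν + 1))

lemma besselJ_eq_tsum (ν t : ℝ) : besselJ ν t = ∑' k, bTerm ν t k := rfl

lemma aux_two_pow_le_two_mul_factorial (k : ℕ) : 2 ^ k ≤ 2 * k.factorial := by
  induction k with
  | zero => simp
  | succ k ih =>
    rcases Nat.eq_zero_or_pos k with hk | hk
    · subst hk; simp [Nat.factorial]
    · calc 2 ^ (k+1) = 2 * 2 ^ k := by ring
        _ ≤ 2 * (2 * k.factorial) := by omega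
        _ ≤ 2 * ((k+1) * k.factorial) := by
            have : 2 ≤ k + 1 := by omega
            exact Nat.mul_le_mul_left _ (Nat.mul_le_mul_right _ this)
        _ = 2 * (k+1).factorial := by rw [Nat.factorial_succ]

lemma aux_four_pow_le (k : ℕ) : (4:ℝ) ^ k ≤ 4 * ((k.factorial : ℝ)) ^ 2 := by
  have h := aux_two_pow_le_two_mul_factorial k
  have h' : ((2:ℝ) ^ k) ≤ 2 * (k.factorial : ℝ) := by exact_mod_cast h
  have h2 : (0:ℝ) ≤ 2 ^ k := by positivity
  calc (4:ℝ) ^ k = (2 ^ k) * (2 ^ k) := by rw [← mul_pow]; norm_num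
    _ ≤ (2 * k.factorial) * (2 * k.factorial) := by
        exact mul_le_mul h' h' h2 (by positivity)
    _ = 4 * (k.factorial : ℝ) ^ 2 := by ring

/-- `Γ(k + ν + 1) ≥ (k!/2^k) Γ(ν+1)` for `ν ≥ -1/2`. -/
lemma aux_gamma_lower {ν : ℝ} (hν : -(1/2 : ℝ) ≤ ν) (k : ℕ) :
    (k.factorial : ℝ) / 2 ^ k * Real.Gamma (ν + 1) ≤ Real.Gamma ((k : ℝ) + ν + 1) := by
  have hG : 0 < Real.Gamma (ν + 1) := Real.Gamma_pos_of_pos (by linarith)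
  induction k with
  | zero => simp
  | succ k ih =>
    have hpos : (0:ℝ) < (k : ℝ) + ν + 1 := by
      have : (0:ℝ) ≤ (k:ℝ) := Nat.cast_nonneg k
      linarith
    have hGk : 0 < Real.Gamma ((k : ℝ) + ν + 1) := Real.Gamma_pos_of_pos hpos
    have hrec : Real.Gamma (((k+1 : ℕ) : ℝ) + ν + 1)
        = ((k : ℝ) + ν + 1) * Real.Gamma ((k : ℝ) + ν + 1) := by
      push_cast
      rw [show (k:ℝ) + 1 + ν + 1 = ((k:ℝ) + ν + 1) + 1 by ring,
        Real.Gamma_add_one (ne_of_gt hpos)]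
    rw [hrec]
    have h1 : ((k:ℝ)+1) / 2 ≤ (k : ℝ) + ν + 1 := by
      have : (0:ℝ) ≤ (k:ℝ) := Nat.cast_nonneg k
      linarith
    calc ((k+1).factorial : ℝ) / 2 ^ (k+1) * Real.Gamma (ν + 1)
        = (((k:ℝ)+1)/2) * ((k.factorial : ℝ) / 2 ^ k * Real.Gamma (ν + 1)) := by
          rw [Nat.factorial_succ]; push_cast; ring
      _ ≤ ((k:ℝ) + ν + 1) * Real.Gamma ((k : ℝ) + ν + 1) := by
          apply mul_le_mul h1 ih (by positivity) (le_of_lt hpos)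

lemma bTerm_abs_le {ν t : ℝ} (hν : -(1/2 : ℝ) ≤ ν) (ht0 : 0 < t) (ht1 : t ≤ 1) (k : ℕ) :
    |bTerm ν t k| ≤ (t/2) ^ ν / Real.Gamma (ν + 1) * (4 * (8:ℝ)⁻¹ ^ k) := by
  have hG : 0 < Real.Gamma (ν + 1) := Real.Gamma_pos_of_pos (by linarith)
  have ht2 : (0:ℝ) < t / 2 := by linarith
  have hpos : (0:ℝ) < (k : ℝ) + ν + 1 := by
    have : (0:ℝ) ≤ (k:ℝ) := Nat.cast_nonneg k; linarith
  have hGk : 0 < Real.Gamma ((k : ℝ) + ν + 1) := Real.Gamma_pos_of_pos hpos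
  have hfac : Real.Gamma ((k : ℝ) + 1) = (k.factorial : ℝ) := Real.Gamma_nat_eq_factorial k
  have hfacpos : (0:ℝ) < (k.factorial : ℝ) := by exact_mod_cast k.factorial_pos
  have habs : |bTerm ν t k|
      = (t/2) ^ (ν + 2 * (k:ℝ)) / ((k.factorial : ℝ) * Real.Gamma ((k : ℝ) + ν + 1)) := by
    rw [bTerm, hfac, abs_div, abs_mul, abs_pow, abs_neg, abs_one, one_pow, one_mul,
      abs_of_pos (Real.rpow_pos_of_pos ht2 _), abs_of_pos (by positivity)]
  rw [habs]
  have hsplit : (t/2) ^ (ν + 2 * (k:ℝ)) = (t/2) ^ ν * ((t/2) ^ k)^2 := by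
    rw [Real.rpow_add ht2, show (2:ℝ) * (k:ℝ) = ((2*k : ℕ) : ℝ) by push_cast; ring,
      Real.rpow_natCast, pow_mul']
  have h12 : t/2 ≤ (2:ℝ)⁻¹ := by rw [show ((2:ℝ)⁻¹) = 1/2 by norm_num]; linarith
  have hb1 : ((t/2) ^ k) ^ 2 ≤ (4:ℝ)⁻¹ ^ k := by
    calc ((t/2) ^ k) ^ 2 ≤ ((2:ℝ)⁻¹ ^ k) ^ 2 := by
          exact pow_le_pow_left₀ (by positivity) (pow_le_pow_left₀ (le_of_lt ht2) h12 k) 2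
      _ = (4:ℝ)⁻¹ ^ k := by
          rw [← pow_mul, pow_mul']
          norm_num
  set A := (t/2) ^ ν with hA
  have hA0 : 0 < A := Real.rpow_pos_of_pos ht2 ν
  set G := Real.Gamma (ν + 1) with hGdef
  have hden : (k.factorial : ℝ)^2 * G / 2^k ≤ (k.factorial : ℝ) * Real.Gamma ((k : ℝ) + ν + 1) := by
    have := aux_gamma_lower hν k
    calc (k.factorial : ℝ)^2 * G / 2^k
        = (k.factorial : ℝ) * ((k.factorial : ℝ) / 2^k * G) := by ring
      _ ≤ (k.factorial : ℝ) * Real.Gamma ((k : ℝ) + ν + 1) :=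
          mul_le_mul_of_nonneg_left this (le_of_lt hfacpos)
  have hdenpos : (0:ℝ) < (k.factorial : ℝ)^2 * G / 2^k := by positivity
  have hnum : (t/2) ^ (ν + 2 * (k:ℝ)) ≤ A * (4:ℝ)⁻¹ ^ k := by
    rw [hsplit]; exact mul_le_mul_of_nonneg_left hb1 (le_of_lt hA0)
  have step1 : (t/2) ^ (ν + 2 * (k:ℝ)) / ((k.factorial : ℝ) * Real.Gamma ((k : ℝ) + ν + 1))
      ≤ (A * (4:ℝ)⁻¹ ^ k) / ((k.factorial : ℝ)^2 * G / 2^k) :=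
    div_le_div₀ (by positivity) hnum hdenpos hden
  have key : (4:ℝ)⁻¹^k * 2^k / ((k.factorial : ℝ))^2 ≤ 4 * (8:ℝ)⁻¹^k := by
    rw [div_le_iff₀ (by positivity)]
    have h4 := aux_four_pow_le k
    have h8 : (0:ℝ) ≤ (8:ℝ)⁻¹^k := by positivity
    calc (4:ℝ)⁻¹^k * 2^k = 4^k * (8:ℝ)⁻¹^k := by
          rw [← mul_pow, ← mul_pow]; norm_num
      _ ≤ (4 * ((k.factorial : ℝ))^2) * (8:ℝ)⁻¹^k := mul_le_mul_of_nonneg_right h4 h8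
      _ = 4 * (8:ℝ)⁻¹^k * ((k.factorial : ℝ))^2 := by ring
  have hre : (A * (4:ℝ)⁻¹ ^ k) / ((k.factorial : ℝ)^2 * G / 2^k)
      = A / G * ((4:ℝ)⁻¹^k * 2^k / ((k.factorial : ℝ))^2) := by
    field_simp
  calc (t/2) ^ (ν + 2 * (k:ℝ)) / ((k.factorial : ℝ) * Real.Gamma ((k : ℝ) + ν + 1))
      ≤ A / G * ((4:ℝ)⁻¹^k * 2^k / ((k.factorial : ℝ))^2) := by rw [← hre]; exact step1
    _ ≤ A / G * (4 * (8:ℝ)⁻¹^k) := mul_le_mul_of_nonneg_left key (by positivity)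

set_option maxHeartbeats 1000000 in
lemma besselJ_est {ν t : ℝ} (hν : -(1/2 : ℝ) ≤ ν) (ht0 : 0 < t) (ht1 : t ≤ 1) :
    Summable (fun k => bTerm ν t k) ∧
    3/7 * ((t/2) ^ ν / Real.Gamma (ν + 1)) ≤ besselJ ν t ∧
    |besselJ ν t| ≤ 2 * ((t/2) ^ ν / Real.Gamma (ν + 1)) := by
  have hG : 0 < Real.Gamma (ν + 1) := Real.Gamma_pos_of_pos (by linarith)
  have ht2 : (0:ℝ) < t / 2 := by linarith
  set c := (t/2) ^ ν / Real.Gamma (ν + 1) with hc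
  have hc0 : 0 < c := by positivity
  have hgeom : Summable (fun k : ℕ => c * (4 * (8:ℝ)⁻¹ ^ k)) :=
    ((summable_geometric_of_lt_one (by norm_num) (by norm_num)).mul_left 4).mul_left c
  have hsum : Summable (fun k => bTerm ν t k) :=
    Summable.of_norm_bounded hgeom (fun k => by
      rw [Real.norm_eq_abs]; exact bTerm_abs_le hν ht0 ht1 k)
  have habs : Summable (fun k => |bTerm ν t k|) := hsum.abs
  have htail : Summable (fun k => bTerm ν t (k+1)) := (summable_nat_add_iff 1).mpr hsum
  have htailabs : Summable (fun k => |bTerm ν t (k+1)|) := (summable_nat_add_iff 1).mpr habs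
  have hgeomtail : Summable (fun k : ℕ => c * (4 * (8:ℝ)⁻¹ ^ (k+1))) :=
    (summable_nat_add_iff 1).mpr hgeom
  have htsum_geom : ∑' k : ℕ, c * (4 * (8:ℝ)⁻¹ ^ (k+1)) = c * (4/7) := by
    have : ∀ k : ℕ, c * (4 * (8:ℝ)⁻¹ ^ (k+1)) = (c * 4 * 8⁻¹) * (8:ℝ)⁻¹ ^ k := by
      intro k; rw [pow_succ]; ring
    rw [tsum_congr this, tsum_mul_left, tsum_geometric_of_lt_one (by norm_num) (by norm_num)]
    norm_num
    ring
  have htailbound : |∑' k, bTerm ν t (k+1)| ≤ c * (4/7) := by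
    calc |∑' k, bTerm ν t (k+1)| ≤ ∑' k, |bTerm ν t (k+1)| := by
          simpa [Real.norm_eq_abs] using norm_tsum_le_tsum_norm (f := fun k => bTerm ν t (k+1))
            (by simpa [Real.norm_eq_abs] using htailabs)
      _ ≤ ∑' k : ℕ, c * (4 * (8:ℝ)⁻¹ ^ (k+1)) :=
          Summable.tsum_le_tsum (fun k => bTerm_abs_le hν ht0 ht1 (k+1)) htailabs hgeomtail
      _ = c * (4/7) := htsum_geom
  have hterm0 : bTerm ν t 0 = c := by
    simp [bTerm, Real.Gamma_one, hc]
  have hsplit : besselJ ν t = bTerm ν t 0 + ∑' k, bTerm ν t (k+1) := by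
    rw [besselJ_eq_tsum]; exact Summable.tsum_eq_zero_add hsum
  refine ⟨hsum, ?_, ?_⟩
  · rw [hsplit, hterm0]
    have := (abs_le.mp htailbound).1
    linarith
  · rw [hsplit, hterm0]
    have h1 := (abs_le.mp htailbound).2
    have h2 := (abs_le.mp htailbound).1
    rw [abs_le]; constructor <;> linarith

/-- The integral `∫_{2η}^1 t^{-1} t^{(2-n)/2} J_{(n-2)/2}(t) dt` grows like `ln(1/η)`
as `η → 0⁺`. -/
theorem bessel_integral_log_divergence (n : ℕ) (hn : 1 ≤ n) :
    ∃ C > 0, ∃ δ > 0, ∃ η₀ > 0, ∀ η : ℝ, 0 < η → η < η₀ →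
      C * |Real.log η| - δ ≤
        |∫ t in (2 * η)..1, t⁻¹ * t ^ (((2 : ℝ) - n) / 2) * besselJ (((n : ℝ) - 2) / 2) t| := by
  set ν : ℝ := ((n : ℝ) - 2) / 2 with hνdef
  have hn1 : (1:ℝ) ≤ (n:ℝ) := by exact_mod_cast hn
  have hν : -(1/2 : ℝ) ≤ ν := by rw [hνdef]; linarith
  have hG : 0 < Real.Gamma (ν + 1) := Real.Gamma_pos_of_pos (by linarith)
  set G := Real.Gamma (ν + 1) with hGdef
  set c2 : ℝ := (2:ℝ) ^ (-ν) with hc2def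
  have hc2 : 0 < c2 := Real.rpow_pos_of_pos (by norm_num) _
  set C : ℝ := 3/7 * c2 / G with hCdef
  have hC : 0 < C := by positivity
  refine ⟨C, hC, C * Real.log 2, mul_pos hC (Real.log_pos (by norm_num)), 1/2, by norm_num,
    fun η hη hη2 => ?_⟩
  set a : ℝ := 2 * η with hadef
  have ha0 : 0 < a := by positivity
  have ha1 : a < 1 := by rw [hadef]; linarith
  have hab : a ≤ 1 := le_of_lt ha1
  -- the exponent identity
  have hform : ∀ t : ℝ, 0 < t → t ^ (((2:ℝ) - n) / 2) * (t/2) ^ ν = c2 := by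
    intro t ht
    have h1 : ((2:ℝ) - n) / 2 = -ν := by rw [hνdef]; ring
    have h2 : (0:ℝ) < t ^ ν := Real.rpow_pos_of_pos ht ν
    rw [h1, Real.rpow_neg ht.le, Real.div_rpow ht.le (by norm_num : (0:ℝ) ≤ 2),
      hc2def, Real.rpow_neg (by norm_num : (0:ℝ) ≤ 2)]
    field_simp
  -- pointwise lower bound on [a,1]
  have hlow : ∀ t ∈ Set.Icc a 1, C * t⁻¹ ≤ t⁻¹ * t ^ (((2:ℝ) - n) / 2) * besselJ ν t := by
    intro t ht
    have ht0 : 0 < t := lt_of_lt_of_le ha0 ht.1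
    have hb := (besselJ_est hν ht0 ht.2).2.1
    have hpos : (0:ℝ) ≤ t⁻¹ * t ^ (((2:ℝ) - n) / 2) := by positivity
    calc C * t⁻¹ = t⁻¹ * t ^ (((2:ℝ) - n) / 2) * (3/7 * ((t/2) ^ ν / G)) := by
          have h3 : t⁻¹ * t ^ (((2:ℝ) - n) / 2) * (3/7 * ((t/2) ^ ν / G))
              = 3/7 * (t ^ (((2:ℝ) - n) / 2) * (t/2) ^ ν) / G * t⁻¹ := by ring
          rw [h3, hform t ht0, hCdef]
      _ ≤ t⁻¹ * t ^ (((2:ℝ) - n) / 2) * besselJ ν t :=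
          mul_le_mul_of_nonneg_left hb hpos
  -- measurability
  have hmeas : AEStronglyMeasurable
      (fun t : ℝ => t⁻¹ * t ^ (((2:ℝ) - n) / 2) * besselJ ν t)
      (volume.restrict (Set.Ioc a 1)) := by
    have : AEMeasurable (fun t : ℝ => t⁻¹ * t ^ (((2:ℝ) - n) / 2) * besselJ ν t)
        (volume.restrict (Set.Ioc a 1)) := by
      apply aemeasurable_of_tendsto_metrizable_ae Filter.atTop
        (f := fun N (t : ℝ) => t⁻¹ * t ^ (((2:ℝ) - n) / 2) * ∑ k ∈ Finset.range N, bTerm ν t k)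
      · intro N
        apply Measurable.aemeasurable
        apply Measurable.mul
        · apply Measurable.mul measurable_inv
          measurability
        · apply Finset.measurable_sum
          intro k _
          unfold bTerm
          measurability
      · filter_upwards [ae_restrict_mem measurableSet_Ioc] with t ht
        have ht0 : 0 < t := lt_trans ha0 ht.1
        have hsum := (besselJ_est hν ht0 ht.2).1
        have htend := hsum.hasSum.tendsto_sum_nat
        rw [besselJ_eq_tsum]
        simpa [mul_assoc] using htend.const_mul (t⁻¹ * t ^ (((2:ℝ) - n) / 2))
    exact this.aestronglyMeasurable
  -- integrability of the Bessel integrand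
  have hFint : IntervalIntegrable
      (fun t : ℝ => t⁻¹ * t ^ (((2:ℝ) - n) / 2) * besselJ ν t) volume a 1 := by
    rw [intervalIntegrable_iff_integrableOn_Ioc_of_le hab]
    apply Integrable.mono' (g := fun _ => a⁻¹ * (2 * c2 / G))
      (integrableOn_const measure_Ioc_lt_top.ne) hmeas
    filter_upwards [ae_restrict_mem measurableSet_Ioc] with t ht
    have ht0 : 0 < t := lt_trans ha0 ht.1
    have hup := (besselJ_est hν ht0 ht.2).2.2
    have hpos : (0:ℝ) ≤ t⁻¹ * t ^ (((2:ℝ) - n) / 2) := by positivity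
    rw [Real.norm_eq_abs, abs_mul, abs_of_nonneg hpos]
    calc t⁻¹ * t ^ (((2:ℝ) - n) / 2) * |besselJ ν t|
        ≤ t⁻¹ * t ^ (((2:ℝ) - n) / 2) * (2 * ((t/2) ^ ν / G)) :=
          mul_le_mul_of_nonneg_left hup hpos
      _ = t⁻¹ * (2 * c2 / G) := by
          have h3 : t⁻¹ * t ^ (((2:ℝ) - n) / 2) * (2 * ((t/2) ^ ν / G))
              = 2 * (t ^ (((2:ℝ) - n) / 2) * (t/2) ^ ν) / G * t⁻¹ := by ring
          rw [h3, hform t ht0]; ring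
      _ ≤ a⁻¹ * (2 * c2 / G) := by
          apply mul_le_mul_of_nonneg_right _ (by positivity)
          exact inv_anti₀ ha0 (le_of_lt ht.1)
  -- integrability of the comparison function
  have hgint : IntervalIntegrable (fun t : ℝ => C * t⁻¹) volume a 1 := by
    apply ContinuousOn.intervalIntegrable
    rw [Set.uIcc_of_le hab]
    exact continuousOn_const.mul (ContinuousOn.inv₀ continuousOn_id
      (fun x hx => ne_of_gt (lt_of_lt_of_le ha0 hx.1)))
  have hcomp := intervalIntegral.integral_mono_on hab hgint hFint hlow
  have hint_inv : ∫ t in a..1, C * t⁻¹ = C * Real.log (1/a) := by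
    rw [intervalIntegral.integral_const_mul, integral_inv_of_pos ha0 one_pos]
  have hloga : Real.log (1/a) = -Real.log 2 - Real.log η := by
    rw [one_div, Real.log_inv, hadef, Real.log_mul (by norm_num) (ne_of_gt hη)]
    ring
  have hlogη : |Real.log η| = -Real.log η :=
    abs_of_neg (Real.log_neg hη (by linarith))
  calc C * |Real.log η| - C * Real.log 2
      = C * Real.log (1/a) := by rw [hlogη, hloga]; ring
    _ = ∫ t in a..1, C * t⁻¹ := hint_inv.symm
    _ ≤ ∫ t in a..1, t⁻¹ * t ^ (((2:ℝ) - n) / 2) * besselJ ν t := hcomp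
    _ ≤ |∫ t in a..1, t⁻¹ * t ^ (((2:ℝ) - n) / 2) * besselJ ν t| := le_abs_self _
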